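/- arXiv:2309.15654 — 4 statements merged into one kernel-verified Lean document; each statement's English description precedes it below -/
import Mathlib

section
/- Let τ be a finite relational signature and let Γ and Δ be valued τ-structures with domains C and D respectively such that there exists a fractional homomorphism ω from Δ to Γ. Then for every τ-expression φ(x_1,…,x_n), the cost of φ with respect to Γ is at most the cost of φ with respect to Δ, i.e. inf_{b ∈ C^n} φ^Γ(b) ≤ inf_{a ∈ D^n} φ^Δ(a). -/
open MeasureTheory
open scoped ENNReal NNReal

/-- The value space `ℚ ∪ {∞}`. -/
abbrev QInf : Type := WithTop ℚ

/-- The embedding of `ℚ ∪ {∞}` into the extended reals. -/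
noncomputable def QInf.toE (x : QInf) : EReal :=
  WithTop.recTopCoe ⊤ (fun q : ℚ => ((q : ℝ) : EReal)) x

/-- A relational signature: a collection of relation symbols with arities. -/
structure Signature where
  symbols : Type
  arity : symbols → ℕ

/-- A valued `τ`-structure with domain `C`: each symbol is interpreted as a valued relation. -/
def VStruct (τ : Signature) (C : Type) : Type :=
  ∀ s : τ.symbols, (Fin (τ.arity s) → C) → QInf

/-- An atom `R(x_{i_1},…,x_{i_k})` with variables from `V`. -/
structure SAtom (τ : Signature) (V : Type) where
  sym : τ.symbols
  vars : Fin (τ.arity sym) → V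

/-- A `τ`-expression: a finite formal sum of atoms. -/
def Expr (τ : Signature) (V : Type) : Type := List (SAtom τ V)

/-- Evaluation of a `τ`-expression in a valued structure. -/
def Expr.eval {τ : Signature} {C V : Type} (Γ : VStruct τ C) (φ : Expr τ V)
    (a : V → C) : QInf :=
  (φ.map fun t => Γ t.sym fun i => a (t.vars i)).sum

/-- The product topology on `D → C` where `C` carries the discrete topology. -/
def fnTop (D C : Type) : TopologicalSpace (D → C) :=
  @Pi.topologicalSpace D (fun _ => C) (fun _ => ⊥)

/-- The Borel σ-algebra on `D → C` for the product of discrete topologies. -/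
noncomputable def fnBorel (D C : Type) : MeasurableSpace (D → C) :=
  @borel (D → C) (fnTop D C)

/-- A fractional map from `D` to `C`: a Borel probability measure on `C^D`. -/
def IsFracMap {D C : Type} (ω : @Measure (D → C) (fnBorel D C)) : Prop :=
  @IsProbabilityMeasure (D → C) (fnBorel D C) ω

/-- The positive part of an extended real, as an extended nonnegative real. -/
noncomputable def erealPos (x : EReal) : ℝ≥0∞ :=
  if x = ⊤ then ⊤ else ENNReal.ofReal x.toReal

/-- The `EReal`-valued Lebesgue integral: integral of the positive part minus
integral of the negative part. -/
noncomputable def ERInt {D C : Type} (ω : @Measure (D → C) (fnBorel D C))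
    (X : (D → C) → EReal) : EReal :=
  ((@MeasureTheory.lintegral (D → C) (fnBorel D C) ω fun f => erealPos (X f) : ℝ≥0∞) : EReal)
    - ((@MeasureTheory.lintegral (D → C) (fnBorel D C) ω fun f => erealPos (-X f) : ℝ≥0∞) : EReal)

/-- Existence of the `EReal`-valued Lebesgue integral: the integrand is Borel measurable and
not both the positive and the negative part have infinite integral. -/
def EIntEx {D C : Type} (ω : @Measure (D → C) (fnBorel D C)) (X : (D → C) → EReal) : Prop :=
  (@Measurable (D → C) EReal (fnBorel D C) inferInstance X) ∧
    ((@MeasureTheory.lintegral (D → C) (fnBorel D C) ω fun f => erealPos (X f)) ≠ ⊤ ∨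
      (@MeasureTheory.lintegral (D → C) (fnBorel D C) ω fun f => erealPos (-X f)) ≠ ⊤)

/-- A fractional homomorphism from `Δ` to `Γ`. -/
def IsFracHom {τ : Signature} {D C : Type} (Δ : VStruct τ D) (Γ : VStruct τ C)
    (ω : @Measure (D → C) (fnBorel D C)) : Prop :=
  IsFracMap ω ∧
    ∀ (s : τ.symbols) (a : Fin (τ.arity s) → D),
      EIntEx ω (fun f => QInf.toE (Γ s (f ∘ a))) ∧
        ERInt ω (fun f => QInf.toE (Γ s (f ∘ a))) ≤ QInf.toE (Δ s a)

/-- An automorphism of a valued structure. -/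
def IsVAuto {τ : Signature} {C : Type} (Γ : VStruct τ C) (α : Equiv.Perm C) : Prop :=
  ∀ (s : τ.symbols) (a : Fin (τ.arity s) → C), Γ s (fun i => α (a i)) = Γ s a

/-- The automorphism group of a valued structure is oligomorphic: for each `k` there are
finitely many orbits of `k`-tuples. -/
def VOligo {τ : Signature} {C : Type} (Γ : VStruct τ C) : Prop :=
  ∀ k : ℕ, ∃ F : Set (Fin k → C), F.Finite ∧
    ∀ a : Fin k → C, ∃ b ∈ F, ∃ α : Equiv.Perm C,
      IsVAuto Γ α ∧ (fun i => α (b i)) = a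

lemma QInf.toE_ne_bot (x : WithTop ℚ) : QInf.toE x ≠ ⊥ := by
  induction x using WithTop.recTopCoe <;> simp [QInf.toE]

lemma QInf.toE_top : QInf.toE ⊤ = ⊤ := rfl

lemma QInf.toE_eq_top_iff (x : WithTop ℚ) : QInf.toE x = ⊤ ↔ x = ⊤ := by
  induction x using WithTop.recTopCoe <;> simp [QInf.toE]

lemma QInf.toE_add (x y : WithTop ℚ) : QInf.toE (x + y) = QInf.toE x + QInf.toE y := by
  induction x using WithTop.recTopCoe with
  | top =>
    rw [top_add, QInf.toE_top, (EReal.top_add_of_ne_bot (QInf.toE_ne_bot y))]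
  | coe q =>
    induction y using WithTop.recTopCoe with
    | top =>
      rw [add_top, QInf.toE_top, (EReal.add_top_of_ne_bot (QInf.toE_ne_bot (q : WithTop ℚ)))]
    | coe r =>
      rw [← WithTop.coe_add]
      show (((q + r : ℚ) : ℝ) : EReal) = (((q:ℚ):ℝ):EReal) + (((r:ℚ):ℝ):EReal)
      norm_cast

lemma QInf.toE_sum {ι : Type*} (s : Finset ι) (x : ι → WithTop ℚ) :
    QInf.toE (∑ i ∈ s, x i) = ∑ i ∈ s, QInf.toE (x i) := by
  induction s using Finset.cons_induction with
  | empty =>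
    simp only [Finset.sum_empty]
    show (((0:ℚ):ℝ):EReal) = 0
    norm_cast
  | cons i s hi ih => simp [Finset.sum_cons, QInf.toE_add, ih]

lemma erealPos_mono : Monotone erealPos := by
  intro x y h
  unfold erealPos
  split_ifs with hx hy hy
  · exact le_rfl
  · exact absurd (top_le_iff.mp (hx ▸ h)) hy
  · exact le_top
  · induction x using EReal.rec with
    | bot => simp
    | coe a =>
      induction y using EReal.rec with
      | bot => exact absurd h (by simp)
      | coe b => exact ENNReal.ofReal_le_ofReal (by exact_mod_cast h)
      | top => exact absurd rfl hy
    | top => exact absurd rfl hx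

lemma erealPos_coe (r : ℝ) : erealPos (r : EReal) = ENNReal.ofReal r := by
  simp [erealPos]

lemma erealPos_ne_top {x : EReal} (h : x ≠ ⊤) : erealPos x ≠ ⊤ := by
  simp [erealPos, h]

lemma erealPos_zero : erealPos 0 = 0 := by simp [erealPos]

lemma erealPos_bot : erealPos ⊥ = 0 := by
  simp [erealPos]

lemma measurable_erealPos : Measurable erealPos := by
  unfold erealPos
  have hset : MeasurableSet {x : EReal | x = ⊤} := by
    rw [Set.setOf_eq_eq_singleton]
    exact measurableSet_singleton _
  refine Measurable.ite hset measurable_const ?_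
  exact ENNReal.measurable_ofReal.comp measurable_ereal_toReal

lemma erealPos_sub_self {x : EReal} (h : x ≠ ⊥) :
    (erealPos x : EReal) - (erealPos (-x) : EReal) = x := by
  induction x using EReal.rec with
  | bot => exact absurd rfl h
  | coe r =>
    rw [erealPos_coe, ← EReal.coe_neg, erealPos_coe, EReal.coe_ennreal_ofReal,
      EReal.coe_ennreal_ofReal, ← EReal.coe_sub]
    norm_cast
    rcases le_total r 0 with hr | hr <;> simp [max_def, hr]
  | top =>
    show ((⊤ : ℝ≥0∞) : EReal) - (erealPos ⊥ : EReal) = ⊤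
    rw [erealPos_bot, EReal.coe_ennreal_top]
    simp

lemma erealCoe_sum {ι : Type*} (s : Finset ι) (g : ι → ℝ) :
    ((∑ i ∈ s, g i : ℝ) : EReal) = ∑ i ∈ s, ((g i : ℝ) : EReal) := by
  induction s using Finset.cons_induction with
  | empty => simp
  | cons i s hi ih => rw [Finset.sum_cons, Finset.sum_cons, EReal.coe_add, ih]

lemma erealSum_ne_bot {ι : Type*} (s : Finset ι) (x : ι → EReal)
    (h : ∀ i ∈ s, x i ≠ ⊥) : ∑ i ∈ s, x i ≠ ⊥ := by
  induction s using Finset.cons_induction with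
  | empty => simp
  | cons i s hi ih =>
    rw [Finset.sum_cons]
    intro hb
    rcases EReal.add_eq_bot_iff.mp hb with h1 | h1
    · exact h i (Finset.mem_cons_self i s) h1
    · exact ih (fun j hj => h j (Finset.mem_cons.mpr (Or.inr hj))) h1

lemma ofReal_quad (r s : ℝ) :
    ENNReal.ofReal (r + s) + (ENNReal.ofReal (-r) + ENNReal.ofReal (-s)) =
      ENNReal.ofReal (-(r + s)) + (ENNReal.ofReal r + ENNReal.ofReal s) := by
  rw [← ENNReal.toReal_eq_toReal_iff' (by finiteness) (by finiteness)]
  rw [ENNReal.toReal_add (by finiteness) (by finiteness),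
    ENNReal.toReal_add (by finiteness) (by finiteness),
    ENNReal.toReal_add (by finiteness) (by finiteness),
    ENNReal.toReal_add (by finiteness) (by finiteness)]
  simp only [ENNReal.toReal_ofReal']
  simp only [max_def]
  split_ifs <;> linarith

/-- key pointwise identity for sums -/
lemma erealPos_sum_identity {ι : Type*} (s : Finset ι) (x : ι → EReal)
    (h : ∀ i ∈ s, x i ≠ ⊥) :
    erealPos (∑ i ∈ s, x i) + ∑ i ∈ s, erealPos (-(x i)) =
      erealPos (-(∑ i ∈ s, x i)) + ∑ i ∈ s, erealPos (x i) := by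
  by_cases htop : ∃ i ∈ s, x i = ⊤
  · obtain ⟨i, hi, hxi⟩ := htop
    have hsum : ∑ j ∈ s, x j = ⊤ := by
      classical
      rw [← Finset.add_sum_erase _ _ hi, hxi]
      refine EReal.top_add_of_ne_bot ?_
      exact erealSum_ne_bot _ _ (fun j hj => h j (Finset.mem_of_mem_erase hj))
    have h1 : erealPos (∑ i ∈ s, x i) = ⊤ := by rw [hsum]; simp [erealPos]
    have h2 : ∑ j ∈ s, erealPos (x j) = ⊤ := by
      rw [ENNReal.sum_eq_top]
      exact ⟨i, hi, by rw [hxi]; simp [erealPos]⟩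
    rw [h1, h2]
    simp
  · push_neg at htop
    -- all entries are real
    set g : ι → ℝ := fun i => (x i).toReal with hg
    have hx : ∀ i ∈ s, x i = ((g i : ℝ) : EReal) := fun i hi =>
      (EReal.coe_toReal (htop i hi) (h i hi)).symm
    have h1 : ∑ i ∈ s, x i = ((∑ i ∈ s, g i : ℝ) : EReal) := by
      rw [Finset.sum_congr rfl hx, erealCoe_sum]
    have h2 : ∀ i ∈ s, erealPos (x i) = ENNReal.ofReal (g i) := by
      intro i hi; rw [hx i hi, erealPos_coe]
    have h3 : ∀ i ∈ s, erealPos (-(x i)) = ENNReal.ofReal (-(g i)) := by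
      intro i hi; rw [hx i hi, ← EReal.coe_neg, erealPos_coe]
    rw [h1, ← EReal.coe_neg, erealPos_coe, erealPos_coe,
      Finset.sum_congr rfl h2, Finset.sum_congr rfl h3]
    -- now pure ENNReal/real statement
    rw [← ENNReal.toReal_eq_toReal_iff', ENNReal.toReal_add (by finiteness) (ENNReal.sum_ne_top.mpr (by finiteness)),
      ENNReal.toReal_add (by finiteness) (ENNReal.sum_ne_top.mpr (by finiteness)),
      ENNReal.toReal_sum (by finiteness), ENNReal.toReal_sum (by finiteness)]
    · simp only [ENNReal.toReal_ofReal']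
      have key : ∀ t : ℝ, max t 0 = t + max (-t) 0 := by
        intro t; rcases le_total t 0 with ht | ht <;> simp [max_def] <;> split_ifs <;> linarith
      rw [key (∑ i ∈ s, g i)]
      rw [Finset.sum_congr rfl (fun i (hi : i ∈ s) => key (g i)), Finset.sum_add_distrib]
      ring
    · exact ENNReal.add_ne_top.mpr ⟨by finiteness, ENNReal.sum_ne_top.mpr (by finiteness)⟩
    · exact ENNReal.add_ne_top.mpr ⟨by finiteness, ENNReal.sum_ne_top.mpr (by finiteness)⟩

lemma ennreal_coe_ereal_eq {x : ℝ≥0∞} (h : x ≠ ⊤) : (x : EReal) = ((x.toReal : ℝ) : EReal) := by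
  lift x to ℝ≥0 using h
  rw [EReal.coe_nnreal_eq_coe_real]
  simp

lemma ereal_top_sub_ennreal {x : ℝ≥0∞} (h : x ≠ ⊤) : (⊤ : EReal) - (x : EReal) = ⊤ := by
  rw [ennreal_coe_ereal_eq h]
  exact EReal.top_sub_coe _

/-- lower bound for the EReal Lebesgue integral of a function bounded below -/
lemma eint_lower_bound {α : Type*} [MeasurableSpace α] (μ : Measure α)
    [IsProbabilityMeasure μ] (X : α → EReal) (m : EReal) (hm : m ≠ ⊥)
    (h : ∀ a, m ≤ X a) :
    m ≤ ((∫⁻ a, erealPos (X a) ∂μ : ℝ≥0∞) : EReal) - ((∫⁻ a, erealPos (-X a) ∂μ : ℝ≥0∞) : EReal) := by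
  have hP : (erealPos m : EReal) ≤ ((∫⁻ a, erealPos (X a) ∂μ : ℝ≥0∞) : EReal) := by
    rw [EReal.coe_ennreal_le_coe_ennreal_iff]
    calc erealPos m = ∫⁻ _, erealPos m ∂μ := by simp [lintegral_const]
    _ ≤ _ := lintegral_mono fun a => erealPos_mono (h a)
  have hN : ((∫⁻ a, erealPos (-X a) ∂μ : ℝ≥0∞) : EReal) ≤ (erealPos (-m) : EReal) := by
    rw [EReal.coe_ennreal_le_coe_ennreal_iff]
    calc (∫⁻ a, erealPos (-X a) ∂μ) ≤ ∫⁻ _, erealPos (-m) ∂μ :=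
        lintegral_mono fun a => erealPos_mono (EReal.neg_le_neg_iff.mpr (h a))
    _ = erealPos (-m) := by simp [lintegral_const]
  calc m = (erealPos m : EReal) - (erealPos (-m) : EReal) := (erealPos_sub_self hm).symm
  _ ≤ _ := EReal.sub_le_sub hP hN

/-- Proposition on fractional homomorphisms:
if there is a fractional homomorphism `ω` from `Δ` to `Γ`, then for every `τ`-expression
`φ(x_1,…,x_n)` the cost of `φ` with respect to `Γ` is at most the cost of `φ` with
respect to `Δ`. -/
theorem frac_hom_cost_le {τ : Signature} [Finite τ.symbols] {C D : Type}
    (Γ : VStruct τ C) (Δ : VStruct τ D)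
    (ω : @Measure (D → C) (fnBorel D C)) (hω : IsFracHom Δ Γ ω)
    {n : ℕ} (φ : Expr τ (Fin n)) :
    (⨅ b : Fin n → C, QInf.toE (Expr.eval Γ φ b)) ≤
      ⨅ a : Fin n → D, QInf.toE (Expr.eval Δ φ a) := by
  classical
  letI : MeasurableSpace (D → C) := fnBorel D C
  obtain ⟨hprob, hhom⟩ := hω
  haveI : IsProbabilityMeasure ω := hprob
  refine le_iInf fun a => ?_
  set m := ⨅ b : Fin n → C, QInf.toE (Expr.eval Γ φ b) with hm
  by_cases hbot : m = ⊥
  · rw [hbot]; exact bot_le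
  set k := φ.length with hk
  set T : Fin k → SAtom τ (Fin n) := φ.get with hT
  have heval : ∀ {E : Type} (Θ : VStruct τ E) (b : Fin n → E),
      Expr.eval Θ φ b = ∑ i : Fin k, Θ (T i).sym (fun j => b ((T i).vars j)) := by
    intro E Θ b
    show (φ.map _).sum = _
    exact (congrArg List.sum (List.ofFn_getElem_eq_map φ _)).symm.trans List.sum_ofFn
  set d : Fin k → QInf := fun i => Δ (T i).sym (fun j => a ((T i).vars j)) with hd
  have hgoal_eq : QInf.toE (Expr.eval Δ φ a) = QInf.toE (∑ i, d i) := by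
    rw [heval Δ a, hd]
  by_cases hdtop : ∃ i, d i = ⊤
  · obtain ⟨i, hi⟩ := hdtop
    have hs : (∑ i, d i) = ⊤ := WithTop.sum_eq_top.mpr ⟨i, Finset.mem_univ i, hi⟩
    rw [hgoal_eq, hs, QInf.toE_top]; exact le_top
  push_neg at hdtop
  set X : Fin k → (D → C) → EReal :=
    fun i f => QInf.toE (Γ (T i).sym (f ∘ fun j => a ((T i).vars j))) with hX
  have hfh := fun i : Fin k => hhom (T i).sym (fun j => a ((T i).vars j))
  have hXmeas : ∀ i, Measurable (X i) := fun i => (hfh i).1.1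
  set P : Fin k → ℝ≥0∞ := fun i => ∫⁻ f, erealPos (X i f) ∂ω with hP
  set N : Fin k → ℝ≥0∞ := fun i => ∫⁻ f, erealPos (-(X i f)) ∂ω with hN
  have hle : ∀ i, ((P i : ℝ≥0∞) : EReal) - ((N i : ℝ≥0∞) : EReal) ≤ QInf.toE (d i) :=
    fun i => (hfh i).2
  have hPne : ∀ i, P i ≠ ⊤ := by
    intro i hPi
    have hNi : N i ≠ ⊤ := by
      rcases (hfh i).1.2 with hNe | hNe
      · exact absurd hPi hNe
      · exact hNe
    have htop : ((P i : ℝ≥0∞) : EReal) - ((N i : ℝ≥0∞) : EReal) = ⊤ := by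
      rw [hPi, EReal.coe_ennreal_top]
      exact ereal_top_sub_ennreal hNi
    exact hdtop i ((QInf.toE_eq_top_iff _).mp (top_le_iff.mp (htop ▸ hle i)))
  set Y : (D → C) → EReal := fun f => ∑ i, X i f with hY
  have hXbot : ∀ (f : D → C) (i : Fin k), X i f ≠ ⊥ := by
    intro f i; rw [hX]; exact QInf.toE_ne_bot _
  have hmY : ∀ f, m ≤ Y f := by
    intro f
    have h1 := iInf_le (fun b : Fin n → C => QInf.toE (Expr.eval Γ φ b)) (fun v => f (a v))
    rw [heval Γ (fun v => f (a v)), QInf.toE_sum] at h1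
    rw [← hm] at h1
    exact h1
  set PY : ℝ≥0∞ := ∫⁻ f, erealPos (Y f) ∂ω with hPY
  set NY : ℝ≥0∞ := ∫⁻ f, erealPos (-(Y f)) ∂ω with hNY
  have hNYne : NY ≠ ⊤ := by
    have hb : NY ≤ erealPos (-m) := by
      rw [hNY]
      calc (∫⁻ f, erealPos (-(Y f)) ∂ω) ≤ ∫⁻ _, erealPos (-m) ∂ω :=
            lintegral_mono fun f => erealPos_mono (EReal.neg_le_neg_iff.mpr (hmY f))
        _ = erealPos (-m) := by simp [lintegral_const]
    have hmt : (-m : EReal) ≠ ⊤ := fun h => hbot (EReal.neg_eq_top_iff.mp h)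
    exact ne_top_of_le_ne_top (erealPos_ne_top hmt) hb
  have hmeasneg : ∀ i : Fin k, Measurable fun f => erealPos (-(X i f)) := fun i =>
    measurable_erealPos.comp ((hXmeas i).neg)
  have hmeaspos : ∀ i : Fin k, Measurable fun f => erealPos (X i f) := fun i =>
    measurable_erealPos.comp (hXmeas i)
  have hkey : PY + ∑ i, N i = NY + ∑ i, P i := by
    have hpt : ∀ f, erealPos (Y f) + ∑ i, erealPos (-(X i f)) =
        erealPos (-(Y f)) + ∑ i, erealPos (X i f) := by
      intro f
      rw [hY]
      exact erealPos_sum_identity Finset.univ (fun i => X i f) (fun i _ => hXbot f i)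
    calc PY + ∑ i, N i
        = ∫⁻ f, (erealPos (Y f) + ∑ i, erealPos (-(X i f))) ∂ω := by
          rw [lintegral_add_right _ (Finset.measurable_sum _ (fun i _ => hmeasneg i)),
            lintegral_finset_sum _ (fun i _ => hmeasneg i), hPY, hN]
      _ = ∫⁻ f, (erealPos (-(Y f)) + ∑ i, erealPos (X i f)) ∂ω := lintegral_congr hpt
      _ = NY + ∑ i, P i := by
          rw [lintegral_add_right _ (Finset.measurable_sum _ (fun i _ => hmeaspos i)),
            lintegral_finset_sum _ (fun i _ => hmeaspos i), hNY, hP]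
  have hRne : NY + ∑ i, P i ≠ ⊤ :=
    ENNReal.add_ne_top.mpr ⟨hNYne, ENNReal.sum_ne_top.mpr fun i _ => hPne i⟩
  have hPYne : PY ≠ ⊤ := by
    intro h
    apply hRne
    rw [← hkey, h, top_add]
  have hsumNne : (∑ i, N i) ≠ ⊤ := by
    intro h
    apply hRne
    rw [← hkey, h, add_top]
  have hNne : ∀ i, N i ≠ ⊤ := fun i => ENNReal.sum_ne_top.mp hsumNne i (Finset.mem_univ i)
  have hreal : PY.toReal + ∑ i, (N i).toReal = NY.toReal + ∑ i, (P i).toReal := by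
    have h := congrArg ENNReal.toReal hkey
    rwa [ENNReal.toReal_add hPYne hsumNne,
      ENNReal.toReal_add hNYne (ENNReal.sum_ne_top.mpr fun i _ => hPne i),
      ENNReal.toReal_sum (fun i _ => hNne i), ENNReal.toReal_sum (fun i _ => hPne i)] at h
  have hdcoe : ∀ i, QInf.toE (d i) = (((QInf.toE (d i)).toReal : ℝ) : EReal) := fun i =>
    (EReal.coe_toReal (fun h => hdtop i ((QInf.toE_eq_top_iff _).mp h))
      (QInf.toE_ne_bot _)).symm
  have hqi : ∀ i, (P i).toReal - (N i).toReal ≤ (QInf.toE (d i)).toReal := by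
    intro i
    have h1 := hle i
    rw [ennreal_coe_ereal_eq (hPne i), ennreal_coe_ereal_eq (hNne i), ← EReal.coe_sub,
      hdcoe i] at h1
    exact EReal.coe_le_coe_iff.mp h1
  have hmle : m ≤ ((PY.toReal - NY.toReal : ℝ) : EReal) := by
    have h1 := eint_lower_bound ω Y m hbot hmY
    rw [← hPY, ← hNY] at h1
    rwa [ennreal_coe_ereal_eq hPYne, ennreal_coe_ereal_eq hNYne,
      ← EReal.coe_sub] at h1
  rw [hgoal_eq]
  have h4 : QInf.toE (∑ i, d i) = ((∑ i, (QInf.toE (d i)).toReal : ℝ) : EReal) := by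
    rw [QInf.toE_sum, erealCoe_sum]
    exact Finset.sum_congr rfl (fun i _ => hdcoe i)
  calc m ≤ ((PY.toReal - NY.toReal : ℝ) : EReal) := hmle
    _ ≤ ((∑ i, (QInf.toE (d i)).toReal : ℝ) : EReal) := by
        rw [EReal.coe_le_coe_iff]
        have heq : PY.toReal - NY.toReal = ∑ i, ((P i).toReal - (N i).toReal) := by
          rw [Finset.sum_sub_distrib]
          linarith [hreal]
        rw [heq]
        exact Finset.sum_le_sum (fun i _ => hqi i)
    _ = QInf.toE (∑ i, d i) := h4.symm
end

section
/- Let μ be a union of connected conjunctive queries over a finite relational signature τ such that the Gaifman graph of each conjunctive query in μ is a complete graph. Let A_1 and A_2 be finite τ-structures satisfying ¬μ such that the substructure induced on A_1 ∩ A_2 in A_1 coincides with the substructure induced on A_1 ∩ A_2 in A_2. Then the union structure A_1 ∪ A_2 (with domain A_1 ∪ A_2 and each relation the union of the corresponding relations of A_1 and A_2) satisfies ¬μ. -/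
/-- A (classical) relational `τ`-structure with domain `A`. -/
def Struct (τ : Signature) (A : Type) : Type :=
  ∀ s : τ.symbols, Set (Fin (τ.arity s) → A)

/-- A homomorphism between `τ`-structures. -/
def IsHom {τ : Signature} {A B : Type} (𝔄 : Struct τ A) (𝔅 : Struct τ B)
    (h : A → B) : Prop :=
  ∀ s : τ.symbols, ∀ t ∈ 𝔄 s, (fun i => h (t i)) ∈ 𝔅 s

/-- An embedding between `τ`-structures: an injective map preserving the relations and
their complements. -/
def IsEmbedding {τ : Signature} {A B : Type} (𝔄 : Struct τ A) (𝔅 : Struct τ B)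
    (h : A → B) : Prop :=
  Function.Injective h ∧
    ∀ (s : τ.symbols) (t : Fin (τ.arity s) → A), t ∈ 𝔄 s ↔ (fun i => h (t i)) ∈ 𝔅 s

/-- A conjunctive query over `τ`, given by its canonical database: the number `n` of
variables together with the finite `τ`-structure of its atoms on the variables. -/
def CQ (τ : Signature) : Type := (n : ℕ) × Struct τ (Fin n)

/-- A structure satisfies a conjunctive query iff there is a homomorphism from the
canonical database of the query. -/
def SatCQ {τ : Signature} {A : Type} (𝔄 : Struct τ A) (q : CQ τ) : Prop :=
  ∃ h : Fin q.1 → A, IsHom q.2 𝔄 h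

/-- A structure satisfies a union of conjunctive queries iff it satisfies some disjunct. -/
def SatUCQ {τ : Signature} {A : Type} (𝔄 : Struct τ A) (μ : List (CQ τ)) : Prop :=
  ∃ q ∈ μ, SatCQ 𝔄 q

/-- A `τ`-structure is connected if its domain is nonempty and it is not a disjoint union
of two `τ`-structures with nonempty domains. -/
def Connected {τ : Signature} {A : Type} (𝔄 : Struct τ A) : Prop :=
  Nonempty A ∧
    ∀ S : Set A,
      (∀ s : τ.symbols, ∀ t ∈ 𝔄 s, (∀ i, t i ∈ S) ∨ ∀ i, t i ∉ S) →
      S = ∅ ∨ S = Set.univ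

/-- The Gaifman graph of a structure is complete: any two distinct elements occur together
in some tuple of some relation. -/
def GaifmanComplete {τ : Signature} {A : Type} (𝔄 : Struct τ A) : Prop :=
  ∀ a b : A, a ≠ b → ∃ s : τ.symbols, ∃ t ∈ 𝔄 s, (∃ i, t i = a) ∧ ∃ j, t j = b

/-- An automorphism of a relational structure. -/
def StructAuto {τ : Signature} {A : Type} (𝔄 : Struct τ A) (α : Equiv.Perm A) : Prop :=
  ∀ (s : τ.symbols) (t : Fin (τ.arity s) → A), t ∈ 𝔄 s ↔ (fun i => α (t i)) ∈ 𝔄 s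

/-- A structure is homogeneous if every isomorphism between finite substructures extends
to an automorphism. -/
def Homogeneous {τ : Signature} {B : Type} (𝔅 : Struct τ B) : Prop :=
  ∀ S : Set B, S.Finite → ∀ h : B → B, Set.InjOn h S →
    (∀ (s : τ.symbols) (t : Fin (τ.arity s) → B),
      (∀ i, t i ∈ S) → (t ∈ 𝔅 s ↔ (fun i => h (t i)) ∈ 𝔅 s)) →
    ∃ α : Equiv.Perm B, StructAuto 𝔅 α ∧ ∀ x ∈ S, α x = h x

/-- The substructure of `𝔄` induced on a subset `S` of its domain. -/
def Substruct {τ : Signature} {A : Type} (𝔄 : Struct τ A) (S : Set A) : Struct τ ↥S :=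
  fun s => {t | (fun i => ((t i : ↥S) : A)) ∈ 𝔄 s}

/-- `𝔄` belongs to the age of `𝔅`, i.e. embeds into `𝔅`. -/
def InAge {τ : Signature} {B : Type} (𝔅 : Struct τ B) {A : Type} (𝔄 : Struct τ A) : Prop :=
  ∃ e : A → B, IsEmbedding 𝔄 𝔅 e

/-- A structure `𝔅` is finitely bounded: membership of a finite structure in the age of
`𝔅` is equivalent to all its induced substructures of size at most some fixed bound `l`
belonging to the age (this is equivalent to the age being axiomatised by a universal
first-order sentence, for a finite relational signature). -/
def FinitelyBounded {τ : Signature} {B : Type} (𝔅 : Struct τ B) : Prop :=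
  ∃ l : ℕ, ∀ (A : Type) (_ : Finite A) (𝔄 : Struct τ A),
    InAge 𝔅 𝔄 ↔ ∀ S : Set A, Nat.card S ≤ l → InAge 𝔅 (Substruct 𝔄 S)

/-- The automorphism group of a structure is oligomorphic: finitely many orbits of
`k`-tuples for every `k`. -/
def OligoStruct {τ : Signature} {B : Type} (𝔅 : Struct τ B) : Prop :=
  ∀ k : ℕ, ∃ F : Set (Fin k → B), F.Finite ∧
    ∀ a : Fin k → B, ∃ b ∈ F, ∃ α : Equiv.Perm B,
      StructAuto 𝔅 α ∧ (fun i => α (b i)) = a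

/-- A conjunctive query is satisfied in the substructure of `𝔄` induced on a subset `S`:
there is a homomorphism from its canonical database whose image lies in `S`. -/
def SatCQOn {τ : Signature} {X : Type} (𝔄 : Struct τ X) (S : Set X) (q : CQ τ) : Prop :=
  ∃ h : Fin q.1 → X, (∀ v, h v ∈ S) ∧ IsHom q.2 𝔄 h

/-- A union of conjunctive queries is satisfied in the substructure induced on `S`. -/
def SatUCQOn {τ : Signature} {X : Type} (𝔄 : Struct τ X) (S : Set X)
    (μ : List (CQ τ)) : Prop :=
  ∃ q ∈ μ, SatCQOn 𝔄 S q

/-- free amalgamation for UCQs with complete Gaifman graphs: if `μ` is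
a union of connected conjunctive queries with complete Gaifman graphs, and `A₁`, `A₂` are
finite `τ`-structures satisfying `¬μ` (realized on subsets `S₁`, `S₂` of a common set)
that induce the same substructure on `S₁ ∩ S₂`, then their union satisfies `¬μ`. -/
theorem union_not_sat {τ : Signature} [Finite τ.symbols]
    (μ : List (CQ τ))
    (hconn : ∀ q ∈ μ, Connected q.2)
    (hgaif : ∀ q ∈ μ, GaifmanComplete q.2)
    {X : Type} (S₁ S₂ : Set X) (hfin₁ : S₁.Finite) (hfin₂ : S₂.Finite)
    (𝔄₁ 𝔄₂ : Struct τ X)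
    (hsub₁ : ∀ s : τ.symbols, ∀ t ∈ 𝔄₁ s, ∀ i, t i ∈ S₁)
    (hsub₂ : ∀ s : τ.symbols, ∀ t ∈ 𝔄₂ s, ∀ i, t i ∈ S₂)
    (hagree : ∀ (s : τ.symbols) (t : Fin (τ.arity s) → X),
      (∀ i, t i ∈ S₁ ∩ S₂) → (t ∈ 𝔄₁ s ↔ t ∈ 𝔄₂ s))
    (h₁ : ¬ SatUCQOn 𝔄₁ S₁ μ) (h₂ : ¬ SatUCQOn 𝔄₂ S₂ μ) :
    ¬ SatUCQOn (fun s => 𝔄₁ s ∪ 𝔄₂ s) (S₁ ∪ S₂) μ := by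
  rintro ⟨q, hq, h, hS, hhom⟩
  by_cases hall1 : ∀ v, h v ∈ S₁
  · apply h₁
    refine ⟨q, hq, h, hall1, ?_⟩
    intro s t ht
    rcases hhom s t ht with h1 | h2
    · exact h1
    · exact (hagree s _ (fun i => ⟨hall1 (t i), hsub₂ s _ h2 i⟩)).mpr h2
  · by_cases hall2 : ∀ v, h v ∈ S₂
    · apply h₂
      refine ⟨q, hq, h, hall2, ?_⟩
      intro s t ht
      rcases hhom s t ht with h1 | h2
      · exact (hagree s _ (fun i => ⟨hsub₁ s _ h1 i, hall2 (t i)⟩)).mp h1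
      · exact h2
    · push_neg at hall1 hall2
      obtain ⟨v, hv⟩ := hall1
      obtain ⟨w, hw⟩ := hall2
      have hvw : v ≠ w := by
        rintro rfl
        rcases hS v with h | h
        exacts [hv h, hw h]
      obtain ⟨s, t, ht, ⟨i, hi⟩, ⟨j, hj⟩⟩ := hgaif q hq v w hvw
      rcases hhom s t ht with h1 | h2
      · exact hv (hi ▸ hsub₁ s _ h1 i)
      · exact hw (hj ▸ hsub₂ s _ h2 j)
end

section
/- Let μ be a union of conjunctive queries over a finite relational signature τ, let σ ⊆ τ, and let B be a dual of μ. Let A be a bag database over τ with exogenous relation symbols σ, and let u ∈ ℕ. Then the resilience of A with respect to μ is at most u if and only if there exists a map h from the domain of A to the domain of B such that for every R ∈ σ, every tuple t ∈ R^A satisfies h(t) ∈ R^B, and the sum of the multiplicities of the tuples t ∈ R^A with R ∈ τ∖σ and h(t) ∉ R^B is at most u. -/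
/-- resilience via duals: let `𝔅` be a dual of the union of conjunctive
queries `μ`, and let a bag database be given by a finite domain `A` and a multiplicity
function `mult` (a tuple is present iff its multiplicity is positive), with exogenous
relation symbols `σ`.  Then the resilience of the database with respect to `μ` is at most
`u` iff there is a map `h : A → B` preserving all present exogenous tuples such that the
total multiplicity of the present endogenous tuples not preserved by `h` is at most `u`. -/
theorem resilience_iff_hom_to_dual {τ : Signature} [Fintype τ.symbols]
    (σ : Set τ.symbols) (μ : List (CQ τ)) {B : Type} (𝔅 : Struct τ B)
    (hdual : ∀ (A : Type), Finite A → ∀ 𝔄 : Struct τ A,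
      (∃ h : A → B, IsHom 𝔄 𝔅 h) ↔ ¬ SatUCQ 𝔄 μ)
    {A : Type} [Fintype A]
    (mult : ∀ s : τ.symbols, (Fin (τ.arity s) → A) → ℕ) (u : ℕ) :
    (∃ rem : ∀ s : τ.symbols, Set (Fin (τ.arity s) → A),
        (∀ s : τ.symbols, ∀ t ∈ rem s, 0 < mult s t) ∧
        (∀ s ∈ σ, rem s = ∅) ∧
        ¬ SatUCQ (fun s => {t | 0 < mult s t ∧ t ∉ rem s} : Struct τ A) μ ∧
        (∑ s : τ.symbols, ∑ t : Fin (τ.arity s) → A,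
            Set.indicator (rem s) (mult s) t) ≤ u) ↔
      ∃ h : A → B,
        (∀ s ∈ σ, ∀ t : Fin (τ.arity s) → A,
          0 < mult s t → (fun i => h (t i)) ∈ 𝔅 s) ∧
        (∑ s : τ.symbols,
            Set.indicator {s' : τ.symbols | s' ∉ σ}
              (fun s' => ∑ t : Fin (τ.arity s') → A,
                Set.indicator {t' | 0 < mult s' t' ∧ (fun i => h (t' i)) ∉ 𝔅 s'}
                  (mult s') t) s) ≤ u := by
  classical
  constructor
  · rintro ⟨rem, hpos, hσ, hsat, hsum⟩
    obtain ⟨h, hhom⟩ := (hdual A (Finite.of_fintype A) _).mpr hsat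
    refine ⟨h, ?_, ?_⟩
    · intro s hs t ht
      exact hhom s t ⟨ht, by simp [hσ s hs]⟩
    · refine le_trans (Finset.sum_le_sum ?_) hsum
      intro s _
      by_cases hsσ : s ∈ σ
      · rw [Set.indicator_of_notMem (by simpa using hsσ)]
        exact Nat.zero_le _
      · rw [Set.indicator_of_mem (by simpa using hsσ)]
        refine Finset.sum_le_sum ?_
        intro t _
        by_cases htb : t ∈ {t' | 0 < mult s t' ∧ (fun i => h (t' i)) ∉ 𝔅 s}
        · have htr : t ∈ rem s := by
            by_contra hne
            exact htb.2 (hhom s t ⟨htb.1, hne⟩)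
          rw [Set.indicator_of_mem htb, Set.indicator_of_mem htr]
        · rw [Set.indicator_of_notMem htb]
          exact Nat.zero_le _
  · rintro ⟨h, hσh, hsum⟩
    refine ⟨fun s => if s ∈ σ then ∅ else
        {t | 0 < mult s t ∧ (fun i => h (t i)) ∉ 𝔅 s}, ?_, ?_, ?_, ?_⟩
    · intro s t ht
      by_cases hsσ : s ∈ σ
      · simp [hsσ] at ht
      · simp only [if_neg hsσ, Set.mem_setOf_eq] at ht
        exact ht.1
    · intro s hs; simp [hs]
    · refine (hdual A (Finite.of_fintype A) _).mp ⟨h, ?_⟩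
      intro s t ht
      obtain ⟨ht1, ht2⟩ := ht
      by_cases hsσ : s ∈ σ
      · exact hσh s hsσ t ht1
      · simp only [if_neg hsσ, Set.mem_setOf_eq, not_and, not_not] at ht2
        exact ht2 ht1
    · refine le_trans (le_of_eq (Finset.sum_congr rfl ?_)) hsum
      intro s _
      by_cases hsσ : s ∈ σ
      · rw [Set.indicator_of_notMem (by simpa using hsσ)]
        simp [hsσ]
      · rw [Set.indicator_of_mem (by simpa using hsσ)]
        simp only [if_neg hsσ]
end

section
/- Every two-way regular path query has a finite dual. Explicitly: let τ be a finite signature of binary relation symbols and Σ_τ = {R, R⁻ : R ∈ τ}. Then for every regular language L over the alphabet Σ_τ there exists a finite τ-structure B such that for every finite τ-structure A: A has a homomorphism to B if and only if A contains no path whose label belongs to L. -/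
open Computability

namespace TwoWayRPQ

/-- A nondeterministic finite automaton, with relational transition data. -/
structure NA (α : Type) where
  σ : Type
  start : σ → Prop
  accept : σ → Prop
  step : σ → α → σ → Prop

namespace NA

variable {α : Type}

/-- A run of the automaton from a state to a state reading a word. -/
inductive Run (M : NA α) : M.σ → List α → M.σ → Prop
  | nil (s : M.σ) : Run M s [] s
  | cons {s t u : M.σ} {a : α} {w : List α} :
      M.step s a t → Run M t w u → Run M s (a :: w) u

/-- Acceptance of a word. -/
def Accepts (M : NA α) (w : List α) : Prop :=
  ∃ s t, M.start s ∧ M.accept t ∧ M.Run s w t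

/-- The language of the automaton. -/
def lang (M : NA α) : Language α := {v | M.Accepts v}

theorem Run.snoc {M : NA α} {s t u : M.σ} {w : List α} {a : α}
    (h : M.Run s w t) (h' : M.step t a u) : M.Run s (w ++ [a]) u := by
  induction h with
  | nil s => exact Run.cons h' (Run.nil _)
  | cons hst _ ih => exact Run.cons hst (ih h')

theorem run_nil_iff {M : NA α} {s t : M.σ} : M.Run s [] t ↔ s = t := by
  constructor
  · intro h; cases h; rfl
  · rintro rfl; exact Run.nil s

theorem run_cons_iff {M : NA α} {s u : M.σ} {a : α} {w : List α} :
    M.Run s (a :: w) u ↔ ∃ t, M.step s a t ∧ M.Run t w u := by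
  constructor
  · intro h; cases h with | cons h1 h2 => exact ⟨_, h1, h2⟩
  · rintro ⟨t, h1, h2⟩; exact Run.cons h1 h2

/-! ### Constructions -/

def naZero (α : Type) : NA α := ⟨Empty, fun _ => False, fun _ => False, fun _ _ _ => False⟩

def naEps (α : Type) : NA α := ⟨Unit, fun _ => True, fun _ => True, fun _ _ _ => False⟩

def naChar (a : α) : NA α :=
  ⟨Bool, fun s => s = false, fun s => s = true, fun s b t => s = false ∧ t = true ∧ b = a⟩

def naPlus (M N : NA α) : NA α where
  σ := M.σ ⊕ N.σ
  start := fun x => match x with | .inl s => M.start s | .inr t => N.start t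
  accept := fun x => match x with | .inl s => M.accept s | .inr t => N.accept t
  step := fun x a y => match x, y with
    | .inl s, .inl s' => M.step s a s'
    | .inr t, .inr t' => N.step t a t'
    | _, _ => False

def naComp (M N : NA α) : NA α where
  σ := M.σ ⊕ N.σ
  start := fun x => match x with
    | .inl s => M.start s
    | .inr t => N.start t ∧ ∃ s, M.start s ∧ M.accept s
  accept := fun x => match x with | .inl _ => False | .inr t => N.accept t
  step := fun x a y => match x, y with
    | .inl s, .inl s' => M.step s a s'
    | .inl s, .inr t' => ∃ s', M.step s a s' ∧ M.accept s' ∧ N.start t'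
    | .inr t, .inr t' => N.step t a t'
    | .inr _, .inl _ => False

def naStar (M : NA α) : NA α where
  σ := Option M.σ
  start := fun x => x = none
  accept := fun x => match x with | none => True | some s => M.accept s
  step := fun x a y => match x, y with
    | none, some s' => ∃ s0, M.start s0 ∧ M.step s0 a s'
    | some s, some s' => M.step s a s' ∨ (M.accept s ∧ ∃ s0, M.start s0 ∧ M.step s0 a s')
    | _, none => False

/-! ### zero, eps, char -/

theorem naZero_accepts (w : List α) : (naZero α).Accepts w ↔ False := by
  constructor
  · rintro ⟨s, _, _⟩; exact s.elim
  · exact False.elim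

theorem naEps_accepts (w : List α) : (naEps α).Accepts w ↔ w = [] := by
  constructor
  · rintro ⟨s, t, _, _, h⟩
    cases h with
    | nil => rfl
    | cons h1 _ => exact h1.elim
  · rintro rfl; exact ⟨(), (), trivial, trivial, Run.nil _⟩

theorem naChar_accepts (a : α) (w : List α) : (naChar a).Accepts w ↔ w = [a] := by
  constructor
  · rintro ⟨s, t, hs, ht, h⟩
    cases h with
    | nil => simp [naChar] at hs ht; rw [hs] at ht; exact absurd ht (by simp)
    | @cons s u t b w h1 h2 =>
      obtain ⟨h3, rfl, rfl⟩ := h1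
      rcases h2 with _ | ⟨h4, _⟩
      · rfl
      · exact absurd h4.1 (by simp)
  · rintro rfl
    exact ⟨false, true, rfl, rfl, Run.cons ⟨rfl, rfl, rfl⟩ (Run.nil _)⟩

/-! ### plus -/

theorem naPlus_run_inl {M N : NA α} {s : M.σ} {w : List α} {y : (naPlus M N).σ} :
    (naPlus M N).Run (.inl s) w y → ∃ s', y = .inl s' ∧ M.Run s w s' := by
  intro h
  obtain ⟨x, hx⟩ : ∃ x : (naPlus M N).σ, (Sum.inl s : (naPlus M N).σ) = x := ⟨_, rfl⟩
  rw [hx] at h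
  induction h generalizing s with
  | nil t => exact ⟨s, hx ▸ rfl, by rw [← hx] at *; exact Run.nil s⟩
  | @cons x t u a w h1 h2 ih =>
    subst hx
    cases t with
    | inl t =>
      obtain ⟨s', rfl, hr⟩ := ih rfl
      exact ⟨s', rfl, Run.cons h1 hr⟩
    | inr t => exact h1.elim

theorem naPlus_run_inr {M N : NA α} {s : N.σ} {w : List α} {y : (naPlus M N).σ} :
    (naPlus M N).Run (.inr s) w y → ∃ s', y = .inr s' ∧ N.Run s w s' := by
  intro h
  obtain ⟨x, hx⟩ : ∃ x : (naPlus M N).σ, (Sum.inr s : (naPlus M N).σ) = x := ⟨_, rfl⟩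
  rw [hx] at h
  induction h generalizing s with
  | nil t => exact ⟨s, hx ▸ rfl, by rw [← hx] at *; exact Run.nil s⟩
  | @cons x t u a w h1 h2 ih =>
    subst hx
    cases t with
    | inr t =>
      obtain ⟨s', rfl, hr⟩ := ih rfl
      exact ⟨s', rfl, Run.cons h1 hr⟩
    | inl t => exact h1.elim

theorem naPlus_emb_inl {M N : NA α} {s s' : M.σ} {w : List α} (h : M.Run s w s') :
    (naPlus M N).Run (.inl s) w (.inl s') := by
  induction h with
  | nil s => exact Run.nil _
  | cons h1 _ ih => exact Run.cons (show (naPlus M N).step _ _ (.inl _) from h1) ih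

theorem naPlus_emb_inr {M N : NA α} {s s' : N.σ} {w : List α} (h : N.Run s w s') :
    (naPlus M N).Run (.inr s) w (.inr s') := by
  induction h with
  | nil s => exact Run.nil _
  | cons h1 _ ih => exact Run.cons (show (naPlus M N).step _ _ (.inr _) from h1) ih

theorem naPlus_accepts (M N : NA α) (w : List α) :
    (naPlus M N).Accepts w ↔ M.Accepts w ∨ N.Accepts w := by
  constructor
  · rintro ⟨x, y, hx, hy, h⟩
    cases x with
    | inl s =>
      obtain ⟨s', rfl, hr⟩ := naPlus_run_inl h
      exact Or.inl ⟨s, s', hx, hy, hr⟩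
    | inr s =>
      obtain ⟨s', rfl, hr⟩ := naPlus_run_inr h
      exact Or.inr ⟨s, s', hx, hy, hr⟩
  · rintro (⟨s, t, hs, ht, hr⟩ | ⟨s, t, hs, ht, hr⟩)
    · exact ⟨.inl s, .inl t, hs, ht, naPlus_emb_inl hr⟩
    · exact ⟨.inr s, .inr t, hs, ht, naPlus_emb_inr hr⟩


theorem naComp_run_inr {M N : NA α} {t : N.σ} {w : List α} {y : (naComp M N).σ} :
    (naComp M N).Run (.inr t) w y → ∃ t', y = .inr t' ∧ N.Run t w t' := by
  intro h
  obtain ⟨x, hx⟩ : ∃ x : (naComp M N).σ, (Sum.inr t : (naComp M N).σ) = x := ⟨_, rfl⟩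
  rw [hx] at h
  induction h generalizing t with
  | nil s => exact ⟨t, hx ▸ rfl, by rw [← hx] at *; exact Run.nil t⟩
  | @cons x m u a w h1 h2 ih =>
    subst hx
    cases m with
    | inr m =>
      obtain ⟨t', rfl, hr⟩ := ih rfl
      exact ⟨t', rfl, Run.cons h1 hr⟩
    | inl m => exact h1.elim

theorem naComp_emb_inr {M N : NA α} {t t' : N.σ} {w : List α} (h : N.Run t w t') :
    (naComp M N).Run (.inr t) w (.inr t') := by
  induction h with
  | nil s => exact Run.nil _
  | cons h1 _ ih => exact Run.cons (show (naComp M N).step (.inr _) _ (.inr _) from h1) ih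

theorem naComp_run_inl {M N : NA α} {s : M.σ} {w : List α} {t' : N.σ}
    (h : (naComp M N).Run (.inl s) w (.inr t')) :
    ∃ w1 w2 s' t, w = w1 ++ w2 ∧ M.Run s w1 s' ∧ M.accept s' ∧ N.start t ∧ N.Run t w2 t' := by
  obtain ⟨x, hx⟩ : ∃ x : (naComp M N).σ, (Sum.inl s : (naComp M N).σ) = x := ⟨_, rfl⟩
  rw [hx] at h
  obtain ⟨y, hy⟩ : ∃ y : (naComp M N).σ, (Sum.inr t' : (naComp M N).σ) = y := ⟨_, rfl⟩
  rw [hy] at h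
  induction h generalizing s with
  | nil z => rw [← hx] at hy; exact absurd hy (by simp)
  | @cons x m u a w h1 h2 ih =>
    subst hx; subst hy
    cases m with
    | inl m =>
      obtain ⟨w1, w2, s', t, rfl, hr, hacc, hst, hrN⟩ := ih rfl rfl
      exact ⟨a :: w1, w2, s', t, rfl, Run.cons h1 hr, hacc, hst, hrN⟩
    | inr m =>
      obtain ⟨s', hstep, hacc, hstart⟩ := h1
      obtain ⟨t'', heq, hrN⟩ := naComp_run_inr h2
      injection heq with heq; subst heq
      exact ⟨[a], w, s', m, rfl, Run.cons hstep (Run.nil _), hacc, hstart, hrN⟩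

theorem naComp_emb_inl {M N : NA α} {s s' : M.σ} {w : List α} (h : M.Run s w s') :
    (naComp M N).Run (.inl s) w (.inl s') := by
  induction h with
  | nil s => exact Run.nil _
  | cons h1 _ ih => exact Run.cons (show (naComp M N).step (.inl _) _ (.inl _) from h1) ih

theorem naComp_glue {M N : NA α} {s s' : M.σ} {w1 : List α} (h : M.Run s w1 s')
    (hne : w1 ≠ []) (hacc : M.accept s') {t t' : N.σ} (hst : N.start t) {w2 : List α}
    (hrN : N.Run t w2 t') : (naComp M N).Run (.inl s) (w1 ++ w2) (.inr t') := by
  induction h with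
  | nil s => exact absurd rfl hne
  | @cons s m u a w h1 h2 ih =>
    cases h2 with
    | nil =>
      exact Run.cons (show (naComp M N).step (.inl s) a (.inr t) from ⟨m, h1, hacc, hst⟩)
        (naComp_emb_inr hrN)
    | cons h3 h4 =>
      exact Run.cons (show (naComp M N).step (.inl s) a (.inl m) from h1)
        (ih (by simp) hacc)

theorem naComp_accepts (M N : NA α) (w : List α) :
    (naComp M N).Accepts w ↔ ∃ w1 w2, w1 ++ w2 = w ∧ M.Accepts w1 ∧ N.Accepts w2 := by
  constructor
  · rintro ⟨x, y, hx, hy, h⟩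
    cases y with
    | inl => exact hy.elim
    | inr t' =>
      cases x with
      | inl s =>
        obtain ⟨w1, w2, s', t, rfl, hr, hacc, hst, hrN⟩ := naComp_run_inl h
        exact ⟨w1, w2, rfl, ⟨s, s', hx, hacc, hr⟩, ⟨t, t', hst, hy, hrN⟩⟩
      | inr t =>
        obtain ⟨t'', heq, hrN⟩ := naComp_run_inr h
        injection heq with heq; subst heq
        obtain ⟨hstN, s, hs1, hs2⟩ := hx
        exact ⟨[], w, rfl, ⟨s, s, hs1, hs2, Run.nil _⟩, ⟨t, _, hstN, hy, hrN⟩⟩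
  · rintro ⟨w1, w2, rfl, ⟨s, s', hs, hacc, hr⟩, ⟨t, t', hst, haccN, hrN⟩⟩
    rcases eq_or_ne w1 [] with rfl | hne
    · cases hr
      exact ⟨.inr t, .inr t', ⟨hst, s, hs, hacc⟩, haccN, naComp_emb_inr hrN⟩
    · exact ⟨.inl s, .inr t', hs, haccN, naComp_glue hr hne hacc hst hrN⟩


theorem naStar_emb {M : NA α} {s s' : M.σ} {w : List α} (h : M.Run s w s') :
    (naStar M).Run (some s) w (some s') := by
  induction h with
  | nil s => exact Run.nil _
  | cons h1 _ ih =>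
    exact Run.cons (show (naStar M).step (some _) _ (some _) from Or.inl h1) ih

/-- From any "accepting-like" state, a nonempty accepted word of `M` can be appended. -/
theorem naStar_seg {M : NA α} {x : (naStar M).σ} (hx : (naStar M).accept x)
    {s s' s'' : M.σ} {a : α} {w : List α} (hs : M.start s) (h1 : M.step s a s')
    (h2 : M.Run s' w s'') : (naStar M).Run x (a :: w) (some s'') := by
  cases x with
  | none =>
    exact Run.cons (show (naStar M).step none a (some s') from ⟨s, hs, h1⟩) (naStar_emb h2)
  | some t =>
    exact Run.cons (show (naStar M).step (some t) a (some s') from Or.inr ⟨hx, s, hs, h1⟩)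
      (naStar_emb h2)

theorem naStar_sound {M : NA α} {s : M.σ} {w : List α} {y : (naStar M).σ}
    (h : (naStar M).Run (some s) w y) (hy : (naStar M).accept y) :
    ∃ w1 w2, w = w1 ++ w2 ∧ (∃ s', M.Run s w1 s' ∧ M.accept s') ∧
      w2 ∈ M.lang∗ := by
  obtain ⟨x, hx⟩ : ∃ x : (naStar M).σ, (some s : (naStar M).σ) = x := ⟨_, rfl⟩
  rw [hx] at h
  induction h generalizing s with
  | nil z =>
    subst hx
    exact ⟨[], [], rfl, ⟨s, Run.nil s, hy⟩, Language.nil_mem_kstar _⟩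
  | @cons x m u a w h1 h2 ih =>
    subst hx
    cases m with
    | none => exact h1.elim
    | some m =>
      rcases h1 with h1 | ⟨hacc, s0, hs0, hstep⟩
      · obtain ⟨w1, w2, rfl, ⟨s', hr, hacc'⟩, hk⟩ := ih hy rfl
        exact ⟨a :: w1, w2, rfl, ⟨s', Run.cons h1 hr, hacc'⟩, hk⟩
      · obtain ⟨w1, w2, rfl, ⟨s', hr, hacc'⟩, hk⟩ := ih hy rfl
        refine ⟨[], a :: (w1 ++ w2), rfl, ⟨s, Run.nil s, hacc⟩, ?_⟩
        rw [Language.mem_kstar] at hk ⊢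
        obtain ⟨L, rfl, hL⟩ := hk
        refine ⟨(a :: w1) :: L, by simp, ?_⟩
        intro y hy'
        rcases List.mem_cons.mp hy' with rfl | hy''
        · exact ⟨s0, s', hs0, hacc', Run.cons hstep hr⟩
        · exact hL y hy''

theorem naStar_accepts (M : NA α) (w : List α) :
    (naStar M).Accepts w ↔ w ∈ M.lang∗ := by
  constructor
  · rintro ⟨x, y, hx, hy, h⟩
    cases hx
    rcases h with _ | @⟨_, m, _, a, w, h1, h2⟩
    · exact Language.nil_mem_kstar _
    · cases m with
      | none => exact h1.elim
      | some m =>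
        obtain ⟨s0, hs0, hstep⟩ := h1
        obtain ⟨w1, w2, rfl, ⟨s', hr, hacc'⟩, hk⟩ := naStar_sound h2 hy
        rw [Language.mem_kstar] at hk ⊢
        obtain ⟨L, rfl, hL⟩ := hk
        refine ⟨(a :: w1) :: L, by simp, ?_⟩
        intro y hy'
        rcases List.mem_cons.mp hy' with rfl | hy''
        · exact ⟨s0, s', hs0, hacc', Run.cons hstep hr⟩
        · exact hL y hy''
  · intro h
    rw [Language.mem_kstar_iff_exists_nonempty] at h
    obtain ⟨L, rfl, hL⟩ := h
    suffices H : ∀ (L : List (List α)), (∀ y ∈ L, M.Accepts y ∧ y ≠ []) →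
        ∀ x : (naStar M).σ, (naStar M).accept x →
        ∃ y, (naStar M).accept y ∧ (naStar M).Run x L.flatten y by
      obtain ⟨y, hy, hr⟩ := H L hL none trivial
      exact ⟨none, y, rfl, hy, hr⟩
    clear hL
    intro L
    induction L with
    | nil => exact fun _ x hx => ⟨x, hx, Run.nil x⟩
    | cons v L ih =>
      intro hL x hx
      obtain ⟨⟨s, s', hs, hacc, hr⟩, hne⟩ := hL v (by simp)
      cases hr with
      | nil => exact absurd rfl hne
      | cons h1 h2 =>
        obtain ⟨y, hy, hr'⟩ := ih (fun y hy => hL y (by simp [hy])) (some s') hacc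
        refine ⟨y, hy, ?_⟩
        have := naStar_seg hx hs h1 h2
        -- concatenate the two runs
        have conc : ∀ {x z : (naStar M).σ} {u v : List α}, (naStar M).Run x u z →
            ∀ {y}, (naStar M).Run z v y → (naStar M).Run x (u ++ v) y := by
          intro x z u v h
          induction h with
          | nil => exact fun h' => h'
          | cons ha _ ihh => exact fun h' => Run.cons ha (ihh h')
        simpa using conc this hr'
  
end NA

open NA

/-- The NFA of a regular expression. -/
def reNA {α : Type} : RegularExpression α → NA α
  | .zero => naZero α
  | .epsilon => naEps α
  | .char a => naChar a
  | .plus P Q => naPlus (reNA P) (reNA Q)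
  | .comp P Q => naComp (reNA P) (reNA Q)
  | .star P => naStar (reNA P)

theorem reNA_finite {α : Type} (P : RegularExpression α) : Finite (reNA P).σ := by
  induction P with
  | zero => exact inferInstanceAs (Finite Empty)
  | epsilon => exact inferInstanceAs (Finite Unit)
  | char a => exact inferInstanceAs (Finite Bool)
  | plus P Q ihP ihQ =>
    haveI := ihP; haveI := ihQ
    exact inferInstanceAs (Finite ((reNA P).σ ⊕ (reNA Q).σ))
  | comp P Q ihP ihQ =>
    haveI := ihP; haveI := ihQ
    exact inferInstanceAs (Finite ((reNA P).σ ⊕ (reNA Q).σ))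
  | star P ih =>
    haveI := ih
    exact Finite.of_equiv ((reNA P).σ ⊕ PUnit.{1}) (Equiv.optionEquivSumPUnit.{0,0} _).symm

theorem reNA_correct {α : Type} (P : RegularExpression α) (w : List α) :
    (reNA P).Accepts w ↔ w ∈ P.matches' := by
  induction P generalizing w with
  | zero => exact ⟨fun h => ((naZero_accepts w).mp h).elim, fun h => h.elim⟩
  | epsilon => exact (naEps_accepts w).trans (Language.mem_one w).symm
  | char a => exact (naChar_accepts a w).trans Set.mem_singleton_iff.symm
  | plus P Q ihP ihQ =>
    show (naPlus (reNA P) (reNA Q)).Accepts w ↔ w ∈ P.matches' + Q.matches'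
    rw [Language.mem_add, naPlus_accepts, ihP, ihQ]
  | comp P Q ihP ihQ =>
    show (naComp (reNA P) (reNA Q)).Accepts w ↔ w ∈ P.matches' * Q.matches'
    rw [Language.mem_mul, naComp_accepts]
    constructor
    · rintro ⟨w1, w2, rfl, h1, h2⟩; exact ⟨w1, (ihP w1).mp h1, w2, (ihQ w2).mp h2, rfl⟩
    · rintro ⟨w1, h1, w2, h2, rfl⟩; exact ⟨w1, w2, rfl, (ihP w1).mpr h1, (ihQ w2).mpr h2⟩
  | star P ih =>
    show (naStar (reNA P)).Accepts w ↔ w ∈ P.matches'∗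
    rw [naStar_accepts]
    have h : (reNA P).lang = P.matches' := Set.ext fun v => ih v
    rw [h]

end TwoWayRPQ

/-- A path in a structure (given by binary relations `St R` for `R ∈ τ`) from a source to
a target, with the given label: a word over the alphabet `τ ⊕ τ`, where `Sum.inl R` means
traversing an `R`-edge forwards and `Sum.inr R` means traversing it backwards. -/
inductive HasPath {τ A : Type} (St : τ → A → A → Prop) : A → List (τ ⊕ τ) → A → Prop
  | nil (a : A) : HasPath St a [] a
  | consFwd {a b c : A} {w : List (τ ⊕ τ)} (R : τ) :
      St R a b → HasPath St b w c → HasPath St a (Sum.inl R :: w) c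
  | consBwd {a b c : A} {w : List (τ ⊕ τ)} (R : τ) :
      St R b a → HasPath St b w c → HasPath St a (Sum.inr R :: w) c

theorem HasPath.snocFwd {τ A : Type} {St : τ → A → A → Prop} {x a b : A}
    {w : List (τ ⊕ τ)} {R : τ} (h : HasPath St x w a) (h' : St R a b) :
    HasPath St x (w ++ [Sum.inl R]) b := by
  induction h with
  | nil a => exact HasPath.consFwd R h' (HasPath.nil b)
  | consFwd R' h1 _ ih => exact HasPath.consFwd R' h1 (ih h')
  | consBwd R' h1 _ ih => exact HasPath.consBwd R' h1 (ih h')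

theorem HasPath.snocBwd {τ A : Type} {St : τ → A → A → Prop} {x a b : A}
    {w : List (τ ⊕ τ)} {R : τ} (h : HasPath St x w a) (h' : St R b a) :
    HasPath St x (w ++ [Sum.inr R]) b := by
  induction h with
  | nil a => exact HasPath.consBwd R h' (HasPath.nil b)
  | consFwd R' h1 _ ih => exact HasPath.consFwd R' h1 (ih h')
  | consBwd R' h1 _ ih => exact HasPath.consBwd R' h1 (ih h')

open TwoWayRPQ TwoWayRPQ.NA in
/-- every two-way regular path query has a finite dual.  For a finite
signature `τ` of binary relation symbols and a regular expression `μ` over the alphabet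
`Σ_τ = τ ⊕ τ`, there is a finite `τ`-structure `𝔅` such that a finite `τ`-structure `𝔄`
has a homomorphism to `𝔅` if and only if `𝔄` contains no path whose label belongs to the
language of `μ`. -/
theorem twoWayRPQ_has_finite_dual {τ : Type} [Finite τ]
    (μ : RegularExpression (τ ⊕ τ)) :
    ∃ (B : Type) (_ : Finite B) (𝔅 : τ → B → B → Prop),
      ∀ (A : Type), Finite A → ∀ 𝔄 : τ → A → A → Prop,
        (∃ h : A → B, ∀ (R : τ) (a a' : A), 𝔄 R a a' → 𝔅 R (h a) (h a')) ↔
          ¬ ∃ (a c : A) (w : List (τ ⊕ τ)), w ∈ μ.matches' ∧ HasPath 𝔄 a w c := by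
  set M := reNA μ with hM
  haveI : Finite M.σ := reNA_finite μ
  refine ⟨{S : Set M.σ // (∀ s, M.start s → s ∈ S) ∧ ∀ s ∈ S, ¬ M.accept s},
    inferInstance,
    fun R S S' => (∀ q ∈ S.1, ∀ q', M.step q (Sum.inl R) q' → q' ∈ S'.1) ∧
      (∀ q ∈ S'.1, ∀ q', M.step q (Sum.inr R) q' → q' ∈ S.1), ?_⟩
  intro A _ 𝔄
  constructor
  · rintro ⟨h, hh⟩ ⟨a, c, w, hw, hp⟩
    rw [← reNA_correct] at hw
    obtain ⟨s, t, hs, ht, hr⟩ := hw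
    have key : ∀ {a w c}, HasPath 𝔄 a w c →
        ∀ {q q'}, M.Run q w q' → q ∈ (h a).1 → q' ∈ (h c).1 := by
      intro a w c hp
      induction hp with
      | nil a => intro q q' hr hq; cases hr; exact hq
      | consFwd R hst _ ih =>
        intro q q' hr hq
        cases hr with
        | cons h1 h2 => exact ih h2 ((hh R _ _ hst).1 q hq _ h1)
      | consBwd R hst _ ih =>
        intro q q' hr hq
        cases hr with
        | cons h1 h2 => exact ih h2 ((hh R _ _ hst).2 q hq _ h1)
    exact (h c).2.2 t (key hp hr ((h a).2.1 s hs)) ht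
  · intro hno
    refine ⟨fun a => ⟨{q | ∃ x w s, HasPath 𝔄 x w a ∧ M.start s ∧ M.Run s w q},
      fun s hs => ⟨a, [], s, HasPath.nil a, hs, Run.nil s⟩, ?_⟩, ?_⟩
    · rintro q ⟨x, w, s, hp, hs, hr⟩ hacc
      exact hno ⟨x, a, w, (reNA_correct μ w).mp ⟨s, q, hs, hacc, hr⟩, hp⟩
    · intro R a a' hR
      constructor
      · rintro q ⟨x, w, s, hp, hs, hr⟩ q' hstep
        exact ⟨x, w ++ [Sum.inl R], s, hp.snocFwd hR, hs, hr.snoc hstep⟩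
      · rintro q ⟨x, w, s, hp, hs, hr⟩ q' hstep
        exact ⟨x, w ++ [Sum.inr R], s, hp.snocBwd hR, hs, hr.snoc hstep⟩
end
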